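/- For every integer a ≥ 2 and every natural number n ≥ 1, log_a(a^n − n + log_a(a^n − n)) < n and log_a(a^n − n + 1 + log_a(a^n − n + 1)) ≥ n. -/

import Mathlib

theorem stmt9 (a : ℕ) (ha : 2 ≤ a) (n : ℕ) (hn : 1 ≤ n) :
    Real.logb a ((a : ℝ) ^ n - n + Real.logb a ((a : ℝ) ^ n - n)) < n ∧
      Real.logb a ((a : ℝ) ^ n - n + 1 + Real.logb a ((a : ℝ) ^ n - n + 1)) ≥ n := by
  have hb : (1:ℝ) < (a:ℝ) := by exact_mod_cast lt_of_lt_of_le one_lt_two (by exact_mod_cast ha)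
  have hnp : n + 1 ≤ a ^ n := le_trans (Nat.lt_two_pow_self (n := n)) (Nat.pow_le_pow_left ha n)
  have h1 : (n:ℝ) + 1 ≤ (a:ℝ)^n := by exact_mod_cast hnp
  have hn1 : (1:ℝ) ≤ (n:ℝ) := by exact_mod_cast hn
  have hlogsn : Real.logb a ((a:ℝ)^n) = n := by
    rw [Real.logb_pow, Real.logb_self_eq_one hb, mul_one]
  set x : ℝ := (a:ℝ)^n - n with hxdef
  have hx1 : (1:ℝ) ≤ x := by simp only [hxdef]; linarith
  have hx0 : (0:ℝ) < x := by linarith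
  have hlx : Real.logb a x < n := by
    calc Real.logb a x < Real.logb a ((a:ℝ)^n) :=
          Real.logb_lt_logb hb hx0 (by simp only [hxdef]; linarith)
      _ = n := hlogsn
  have hlx0 : 0 ≤ Real.logb a x := Real.logb_nonneg hb hx1
  constructor
  · calc Real.logb a (x + Real.logb a x)
        < Real.logb a ((a:ℝ)^n) := Real.logb_lt_logb hb (by linarith) (by linarith)
      _ = n := hlogsn
  · -- a^(n-1) + n ≤ a^n in ℕ
    have h2n : n ≤ 2 ^ (n-1) := by have := Nat.lt_two_pow_self (n := n-1); omega
    have hpow : 2 ^ (n-1) ≤ a ^ (n-1) := Nat.pow_le_pow_left ha _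
    have hmul : a ^ (n-1) + a ^ (n-1) ≤ a ^ n := by
      have : a ^ n = a ^ (n-1) * a := by
        rw [← pow_succ]; congr 1; omega
      calc a ^ (n-1) + a ^ (n-1) = a ^ (n-1) * 2 := by ring
        _ ≤ a ^ (n-1) * a := Nat.mul_le_mul_left _ ha
        _ = a ^ n := this.symm
    have hnat : a ^ (n-1) + n ≤ a ^ n := by omega
    have hreal : (a:ℝ)^(n-1) + (n:ℝ) ≤ (a:ℝ)^n := by exact_mod_cast hnat
    have hcast : ((n-1 : ℕ) : ℝ) = (n:ℝ) - 1 := by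
      have := Nat.cast_sub hn (R := ℝ); simpa using this
    have hl1 : (n:ℝ) - 1 ≤ Real.logb a (x + 1) := by
      calc (n:ℝ) - 1 = Real.logb a ((a:ℝ)^(n-1)) := by
            rw [Real.logb_pow, Real.logb_self_eq_one hb, mul_one, hcast]
        _ ≤ Real.logb a (x + 1) :=
            Real.logb_le_logb_of_le hb (by positivity) (by simp only [hxdef]; linarith)
    calc (n:ℝ) = Real.logb a ((a:ℝ)^n) := hlogsn.symm
      _ ≤ Real.logb a (x + 1 + Real.logb a (x + 1)) :=
          Real.logb_le_logb_of_le hb (by positivity) (by simp only [hxdef]; linarith)
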